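/- arXiv:2011.01295 — 2 statements merged into one kernel-verified Lean document; each statement's English description precedes it below -/
import Mathlib

section
/- Let u : I → ℂ be infinitely differentiable and satisfy (a(x)u'(x))' + k(x)u(x) = f(x) for all x ∈ I, let x_b ∈ I and let M ≥ 2 be an integer. Then, as h → 0, u(x_b + h) − [ u(x_b)·(1 + Σ_{j=2}^{M} E_{j,0}(x_b) h^j/j!) + u'(x_b)·(h + Σ_{j=2}^{M} E_{j,1}(x_b) h^j/j!) + Σ_{j=2}^{M} Σ_{ℓ=0}^{j−2} F_{j,ℓ}(x_b)·f^{(ℓ)}(x_b)·h^j/j! ] = O(h^{M+1}). -/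
open Filter Topology Asymptotics

/-- `Ecoef a k n = (E_{n+2,0}, E_{n+2,1})` from the recursion of the paper. -/
noncomputable def Ecoef (a : ℝ → ℝ) (k : ℝ → ℂ) : ℕ → (ℝ → ℂ) × (ℝ → ℂ)
  | 0 => (fun x => -k x / (a x : ℂ), fun x => -((deriv a x : ℝ) : ℂ) / (a x : ℂ))
  | n + 1 =>
      (fun x => deriv (Ecoef a k n).1 x - k x / (a x : ℂ) * (Ecoef a k n).2 x,
       fun x => (Ecoef a k n).1 x + deriv (Ecoef a k n).2 x
          - ((deriv a x : ℝ) : ℂ) / (a x : ℂ) * (Ecoef a k n).2 x)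

/-- `E_{j,0}` for `j ≥ 2` (junk value for `j < 2`). -/
noncomputable def Ej0 (a : ℝ → ℝ) (k : ℝ → ℂ) (j : ℕ) : ℝ → ℂ := (Ecoef a k (j - 2)).1

/-- `E_{j,1}` for `j ≥ 2` (junk value for `j < 2`). -/
noncomputable def Ej1 (a : ℝ → ℝ) (k : ℝ → ℂ) (j : ℕ) : ℝ → ℂ := (Ecoef a k (j - 2)).2

/-- `Fcoef a k n m = F_{n+2, m-1}` (second index shifted by one: `m = ℓ + 1`, `ℓ ≥ -1`). -/
noncomputable def Fcoef (a : ℝ → ℝ) (k : ℝ → ℂ) : ℕ → ℕ → ℝ → ℂ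
  | 0, 0 => fun x => (Ecoef a k 0).2 x / (a x : ℂ)
  | 0, 1 => fun x => 1 / (a x : ℂ)
  | 0, _ + 2 => fun _ => 0
  | n + 1, 0 => fun x => (Ecoef a k (n + 1)).2 x / (a x : ℂ)
  | n + 1, m + 1 => fun x => deriv (Fcoef a k n (m + 1)) x + Fcoef a k n m x

/-- `F_{j,ℓ}` for `j ≥ 2`, `ℓ ≥ 0` (junk value for `j < 2`). -/
noncomputable def Fjl (a : ℝ → ℝ) (k : ℝ → ℂ) (j ℓ : ℕ) : ℝ → ℂ := Fcoef a k (j - 2) (ℓ + 1)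

/-- `𝔈₀(h) = 1 + ∑_{j=2}^{B} E_{j,0}(x_b) h^j / j!`. -/
noncomputable def EPoly0 (a : ℝ → ℝ) (k : ℝ → ℂ) (xb : ℝ) (B : ℕ) (h : ℝ) : ℂ :=
  1 + ∑ j ∈ Finset.Icc 2 B, Ej0 a k j xb * (h : ℂ) ^ j / (Nat.factorial j : ℂ)

/-- `𝔈₁(h) = 1 + ∑_{j=2}^{B} E_{j,1}(x_b) h^(j-1) / j!`. -/
noncomputable def EPoly1 (a : ℝ → ℝ) (k : ℝ → ℂ) (xb : ℝ) (B : ℕ) (h : ℝ) : ℂ :=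
  1 + ∑ j ∈ Finset.Icc 2 B, Ej1 a k j xb * (h : ℂ) ^ (j - 1) / (Nat.factorial j : ℂ)

/-- `𝔉_ℓ(h) = ∑_{j=ℓ+2}^{B} F_{j,ℓ}(x_b) h^(j-ℓ-2) / j!`. -/
noncomputable def FPoly (a : ℝ → ℝ) (k : ℝ → ℂ) (xb : ℝ) (ℓ B : ℕ) (h : ℝ) : ℂ :=
  ∑ j ∈ Finset.Icc (ℓ + 2) B, Fjl a k j ℓ xb * (h : ℂ) ^ (j - ℓ - 2) / (Nat.factorial j : ℂ)




private lemma deriv_taylor_poly (c : ℕ → ℂ) (n : ℕ) (t : ℝ) :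
    deriv (fun h : ℝ => ∑ j ∈ Finset.range (n + 2), c j * (h:ℂ) ^ j / (Nat.factorial j : ℂ)) t
      = ∑ j ∈ Finset.range (n + 1), c (j+1) * (t:ℂ) ^ j / (Nat.factorial j : ℂ) := by
  have : deriv (fun h : ℝ => ∑ j ∈ Finset.range (n + 2), c j * (h:ℂ) ^ j / (Nat.factorial j : ℂ)) t
      = ∑ j ∈ Finset.range (n + 2), c j * (j * (t:ℂ) ^ (j-1)) / (Nat.factorial j : ℂ) := by
    have hd : ∀ j ∈ Finset.range (n+2), HasDerivAt
        (fun h : ℝ => c j * (h:ℂ) ^ j / (Nat.factorial j : ℂ))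
        (c j * (j * (t:ℂ) ^ (j-1)) / (Nat.factorial j : ℂ)) t := by
      intro j _
      have h1 : HasDerivAt (fun h : ℝ => ((h:ℝ):ℂ)) 1 t := HasDerivAt.ofReal_comp (hasDerivAt_id t)
      have h2 : HasDerivAt (fun h : ℝ => ((h:ℝ):ℂ) ^ j) ((j * (t:ℂ)^(j-1)) * 1) t :=
        (hasDerivAt_pow j ((t:ℝ):ℂ)).comp t h1
      simpa [div_eq_mul_inv, mul_comm, mul_assoc, mul_left_comm] using
        ((h2.const_mul (c j)).mul_const ((Nat.factorial j : ℂ)⁻¹))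
    exact (HasDerivAt.fun_sum hd).deriv
  rw [this]
  rw [Finset.sum_range_succ' (fun j => c j * (↑j * (t:ℂ) ^ (j-1)) / (Nat.factorial j : ℂ)) (n+1)]
  simp only [Nat.cast_zero, pow_zero, Nat.factorial_zero, Nat.cast_one, zero_mul, mul_zero, zero_div, add_zero]
  refine Finset.sum_congr rfl fun j _ => ?_
  have : ((Nat.factorial (j+1) : ℂ)) = (j+1) * (Nat.factorial j : ℂ) := by
    push_cast [Nat.factorial_succ]; ring
  rw [this]
  have hj1 : ((j:ℂ)+1) ≠ 0 := by exact_mod_cast Nat.succ_ne_zero j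
  have hfj : (Nat.factorial j : ℂ) ≠ 0 := Nat.cast_ne_zero.mpr (Nat.factorial_ne_zero j)
  field_simp
  push_cast
  ring

/-- Peano-form Taylor remainder. -/
private lemma taylor_peano {g : ℝ → ℂ} {s : Set ℝ} (hs : IsOpen s) (h0 : (0:ℝ) ∈ s)
    (hg : ContDiffOn ℝ (⊤:ℕ∞) g s) (n : ℕ) :
    (fun h : ℝ => g h - ∑ j ∈ Finset.range (n+1), iteratedDeriv j g 0 * (h:ℂ) ^ j / (Nat.factorial j : ℂ))
      =O[𝓝 (0:ℝ)] fun h : ℝ => h ^ (n+1) := by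
  induction n generalizing g with
  | zero =>
      have hdiff : DifferentiableAt ℝ g 0 := by
        have := (hg.contDiffAt (hs.mem_nhds h0))
        exact this.differentiableAt (by simp)
      have h1 := hdiff.hasDerivAt.isBigO_sub
      simp only [Finset.sum_range_one, pow_zero, iteratedDeriv_zero, Nat.factorial_zero,
        Nat.cast_one, mul_one, div_one, sub_zero] at h1 ⊢
      simpa using h1
  | succ n ih =>
      set c : ℕ → ℂ := fun j => iteratedDeriv j g 0 with hc
      set R : ℝ → ℂ := fun h => g h - ∑ j ∈ Finset.range (n+2), c j * (h:ℂ) ^ j / (Nat.factorial j : ℂ) with hR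
      have hg' : ContDiffOn ℝ (⊤:ℕ∞) (deriv g) s := hg.deriv_of_isOpen hs (by exact_mod_cast le_top)
      have hdR : ∀ t ∈ s, HasDerivAt R
          (deriv g t - ∑ j ∈ Finset.range (n+1), iteratedDeriv j (deriv g) 0 * (t:ℂ) ^ j / (Nat.factorial j : ℂ)) t := by
        intro t ht
        have hgd : HasDerivAt g (deriv g t) t :=
          ((hg.contDiffAt (hs.mem_nhds ht)).differentiableAt (by simp)).hasDerivAt
        have hpoly : HasDerivAt (fun h : ℝ => ∑ j ∈ Finset.range (n + 2), c j * (h:ℂ) ^ j / (Nat.factorial j : ℂ))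
            (∑ j ∈ Finset.range (n + 1), c (j+1) * (t:ℂ) ^ j / (Nat.factorial j : ℂ)) t := by
          have hd : DifferentiableAt ℝ (fun h : ℝ => ∑ j ∈ Finset.range (n + 2), c j * (h:ℂ) ^ j / (Nat.factorial j : ℂ)) t := by
            apply DifferentiableAt.fun_sum
            intro j _
            apply DifferentiableAt.div_const
            apply DifferentiableAt.const_mul
            exact (Complex.ofRealCLM.differentiableAt.pow j)
          have := hd.hasDerivAt
          rwa [deriv_taylor_poly c n t] at this
        have := hgd.fun_sub hpoly
        convert this using 2 with j
        case e'_4 => rfl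
        rw [hc]
        simp [← iteratedDeriv_succ']
      have ihR := ih hg'
      -- ∃ bound near 0
      rw [isBigO_iff] at ihR ⊢
      obtain ⟨C, hC⟩ := ihR
      rw [eventually_nhds_iff] at hC
      obtain ⟨U, hU, hUopen, hU0⟩ := hC
      obtain ⟨ε, hε, hball⟩ := Metric.isOpen_iff.mp (hUopen.inter hs) 0 ⟨hU0, h0⟩
      refine ⟨|C|, ?_⟩
      rw [eventually_nhds_iff]
      refine ⟨Metric.ball 0 ε, ?_, Metric.isOpen_ball, Metric.mem_ball_self hε⟩
      intro h hh
      have hsub : Set.uIcc 0 h ⊆ Metric.ball (0:ℝ) ε := by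
        intro t ht
        rw [Set.mem_uIcc] at ht
        rw [Metric.mem_ball, Real.dist_eq, sub_zero] at hh ⊢
        rcases ht with ⟨h1, h2⟩ | ⟨h1, h2⟩ <;> [skip; skip] <;>
          · rw [abs_lt] at hh ⊢; constructor <;> nlinarith [hh.1, hh.2]
      have key : ‖R h - R 0‖ ≤ (|C| * |h| ^ (n+1)) * ‖h - 0‖ := by
        apply Convex.norm_image_sub_le_of_norm_hasDerivWithin_le
          (f' := fun t => deriv g t - ∑ j ∈ Finset.range (n+1), iteratedDeriv j (deriv g) 0 * (t:ℂ) ^ j / (Nat.factorial j : ℂ))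
          (fun t ht => (hdR t ((hball (hsub ht)).2)).hasDerivWithinAt)
          (fun t ht => ?_) (convex_uIcc 0 h) (Set.left_mem_uIcc) (Set.right_mem_uIcc)
        have htU : t ∈ U := (hball (hsub ht)).1
        calc ‖deriv g t - ∑ j ∈ Finset.range (n+1), iteratedDeriv j (deriv g) 0 * (t:ℂ) ^ j / (Nat.factorial j : ℂ)‖
            ≤ C * ‖t ^ (n+1)‖ := hU t htU
          _ ≤ |C| * |h| ^ (n+1) := by
              have ht' : |t| ≤ |h| := by
                rw [Set.mem_uIcc] at ht
                rcases ht with ⟨h1, h2⟩ | ⟨h1, h2⟩ <;> rw [abs_le] <;> constructor <;>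
                  cases abs_cases h <;> nlinarith
              calc C * ‖t ^ (n+1)‖ ≤ |C| * ‖t ^ (n+1)‖ := by
                    apply mul_le_mul_of_nonneg_right (le_abs_self C) (norm_nonneg _)
                _ ≤ |C| * |h| ^ (n+1) := by
                    apply mul_le_mul_of_nonneg_left _ (abs_nonneg C)
                    rw [norm_pow, Real.norm_eq_abs]
                    exact pow_le_pow_left₀ (abs_nonneg t) ht' (n+1)
      have hR0 : R 0 = 0 := by
        simp [hR, Finset.sum_range_succ', hc]
      rw [hR0, sub_zero] at key
      calc ‖R h‖ ≤ (|C| * |h| ^ (n+1)) * ‖h - 0‖ := key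
        _ = |C| * ‖h ^ (n+2)‖ := by
            rw [sub_zero, Real.norm_eq_abs, Real.norm_eq_abs, abs_pow]
            ring
variable {p q : ℝ} {a : ℝ → ℝ} {k : ℝ → ℂ}

private lemma cdiv {s : Set ℝ} {f g : ℝ → ℂ} (hf : ContDiffOn ℝ (⊤:ℕ∞) f s)
    (hg : ContDiffOn ℝ (⊤:ℕ∞) g s) (h0 : ∀ x ∈ s, g x ≠ 0) :
    ContDiffOn ℝ (⊤:ℕ∞) (fun x => f x / g x) s := by
  simp only [div_eq_mul_inv]
  exact hf.mul (hg.inv h0)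

private lemma hane (hapos : ∀ x ∈ Set.Ioo p q, 0 < a x) :
    ∀ x ∈ Set.Ioo p q, ((a x : ℂ)) ≠ 0 := fun x hx => by
  exact_mod_cast (hapos x hx).ne'

private lemma haC (ha : ContDiffOn ℝ (⊤ : ℕ∞) a (Set.Ioo p q)) :
    ContDiffOn ℝ (⊤ : ℕ∞) (fun x => ((a x : ℝ) : ℂ)) (Set.Ioo p q) :=
  Complex.ofRealCLM.contDiff.comp_contDiffOn ha

private lemma haC' (ha : ContDiffOn ℝ (⊤ : ℕ∞) a (Set.Ioo p q)) :
    ContDiffOn ℝ (⊤ : ℕ∞) (fun x => ((deriv a x : ℝ) : ℂ)) (Set.Ioo p q) :=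
  Complex.ofRealCLM.contDiff.comp_contDiffOn
    (ha.deriv_of_isOpen isOpen_Ioo (by exact_mod_cast le_top))

private lemma Ecoef_smooth (ha : ContDiffOn ℝ (⊤ : ℕ∞) a (Set.Ioo p q))
    (hk : ContDiffOn ℝ (⊤ : ℕ∞) k (Set.Ioo p q))
    (hapos : ∀ x ∈ Set.Ioo p q, 0 < a x) :
    ∀ n, ContDiffOn ℝ (⊤ : ℕ∞) (Ecoef a k n).1 (Set.Ioo p q)
    ∧ ContDiffOn ℝ (⊤ : ℕ∞) (Ecoef a k n).2 (Set.Ioo p q) := by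
  intro n
  induction n with
  | zero =>
      constructor
      · exact cdiv hk.neg (haC ha) (hane hapos)
      · exact cdiv (haC' ha).neg (haC ha) (hane hapos)
  | succ n ih =>
      constructor
      · exact (ih.1.deriv_of_isOpen isOpen_Ioo (by exact_mod_cast le_top)).sub
          ((cdiv hk (haC ha) (hane hapos)).mul ih.2)
      · exact (ih.1.add (ih.2.deriv_of_isOpen isOpen_Ioo (by exact_mod_cast le_top))).sub
          ((cdiv (haC' ha) (haC ha) (hane hapos)).mul ih.2)

private lemma Fcoef_smooth (ha : ContDiffOn ℝ (⊤ : ℕ∞) a (Set.Ioo p q))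
    (hk : ContDiffOn ℝ (⊤ : ℕ∞) k (Set.Ioo p q))
    (hapos : ∀ x ∈ Set.Ioo p q, 0 < a x) :
    ∀ n m, ContDiffOn ℝ (⊤ : ℕ∞) (Fcoef a k n m) (Set.Ioo p q) := by
  intro n
  induction n with
  | zero =>
      intro m
      match m with
      | 0 => exact cdiv (Ecoef_smooth ha hk hapos 0).2 (haC ha) (hane hapos)
      | 1 => exact cdiv contDiffOn_const (haC ha) (hane hapos)
      | m + 2 => exact contDiffOn_const
  | succ n ih =>
      intro m
      match m with
      | 0 => exact cdiv (Ecoef_smooth ha hk hapos (n+1)).2 (haC ha) (hane hapos)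
      | m + 1 => exact ((ih (m+1)).deriv_of_isOpen isOpen_Ioo (by exact_mod_cast le_top)).add (ih m)

private lemma Fcoef_zero_right : ∀ n, Fcoef a k n 0 = fun x => (Ecoef a k n).2 x / (a x : ℂ) := by
  intro n; cases n <;> rfl

private lemma Fcoef_eq_zero : ∀ n m, n + 2 ≤ m → Fcoef a k n m = fun _ => 0 := by
  intro n
  induction n with
  | zero =>
      intro m hm
      match m, hm with
      | m + 2, _ => rfl
  | succ n ih =>
      intro m hm
      match m, hm with
      | m + 1, hm =>
        have h1 : Fcoef a k n (m + 1) = fun _ => 0 := ih (m+1) (by omega)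
        have h2 : Fcoef a k n m = fun _ => 0 := ih m (by omega)
        show (fun x => deriv (Fcoef a k n (m + 1)) x + Fcoef a k n m x) = fun _ => 0
        rw [h1, h2]
        funext x
        simp

private lemma iteratedDeriv_smooth {f : ℝ → ℂ} (hf : ContDiffOn ℝ (⊤ : ℕ∞) f (Set.Ioo p q)) :
    ∀ ℓ, ContDiffOn ℝ (⊤ : ℕ∞) (iteratedDeriv ℓ f) (Set.Ioo p q) := by
  intro ℓ
  induction ℓ with
  | zero => simpa using hf
  | succ ℓ ih =>
      rw [iteratedDeriv_succ]
      exact ih.deriv_of_isOpen isOpen_Ioo (by exact_mod_cast le_top)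

private lemma deriv2_formula {p q : ℝ} {a : ℝ → ℝ} {k f u : ℝ → ℂ}
    (ha : ContDiffOn ℝ (⊤ : ℕ∞) a (Set.Ioo p q))
    (hapos : ∀ x ∈ Set.Ioo p q, 0 < a x)
    (hu : ContDiffOn ℝ (⊤ : ℕ∞) u (Set.Ioo p q))
    (hueq : ∀ x ∈ Set.Ioo p q,
      deriv (fun y => (a y : ℂ) * deriv u y) x + k x * u x = f x)
    {x : ℝ} (hx : x ∈ Set.Ioo p q) :
    deriv (deriv u) x = (-k x / (a x : ℂ)) * u x
      + (-((deriv a x : ℝ) : ℂ) / (a x : ℂ)) * deriv u x + (1 / (a x : ℂ)) * f x := by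
  have hane : ((a x : ℂ)) ≠ 0 := by exact_mod_cast (hapos x hx).ne'
  have hda : HasDerivAt a (deriv a x) x :=
    (((ha.contDiffAt (isOpen_Ioo.mem_nhds hx)).differentiableAt
      (by simp))).hasDerivAt
  have hdaC : HasDerivAt (fun y => ((a y : ℝ) : ℂ)) ((deriv a x : ℝ) : ℂ) x :=
    hda.ofReal_comp
  have hu' : ContDiffOn ℝ (⊤ : ℕ∞) (deriv u) (Set.Ioo p q) :=
    hu.deriv_of_isOpen isOpen_Ioo (by exact_mod_cast le_top)
  have hdu' : HasDerivAt (deriv u) (deriv (deriv u) x) x :=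
    ((hu'.contDiffAt (isOpen_Ioo.mem_nhds hx)).differentiableAt
      (by simp)).hasDerivAt
  have hprod : HasDerivAt (fun y => (a y : ℂ) * deriv u y)
      (((deriv a x : ℝ) : ℂ) * deriv u x + (a x : ℂ) * deriv (deriv u) x) x :=
    hdaC.mul hdu'
  have heq := hueq x hx
  rw [hprod.deriv] at heq
  field_simp
  linear_combination heq

private lemma helm_iteratedDeriv {p q : ℝ} {a : ℝ → ℝ} {k f u : ℝ → ℂ}
    (ha : ContDiffOn ℝ (⊤ : ℕ∞) a (Set.Ioo p q))
    (hk : ContDiffOn ℝ (⊤ : ℕ∞) k (Set.Ioo p q))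
    (hf : ContDiffOn ℝ (⊤ : ℕ∞) f (Set.Ioo p q))
    (hapos : ∀ x ∈ Set.Ioo p q, 0 < a x)
    (hu : ContDiffOn ℝ (⊤ : ℕ∞) u (Set.Ioo p q))
    (hueq : ∀ x ∈ Set.Ioo p q,
      deriv (fun y => (a y : ℂ) * deriv u y) x + k x * u x = f x) :
    ∀ n, ∀ x ∈ Set.Ioo p q, iteratedDeriv (n + 2) u x
      = (Ecoef a k n).1 x * u x + (Ecoef a k n).2 x * deriv u x
        + ∑ ℓ ∈ Finset.range (n + 1), Fcoef a k n (ℓ + 1) x * iteratedDeriv ℓ f x := by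
  have hu' : ContDiffOn ℝ (⊤ : ℕ∞) (deriv u) (Set.Ioo p q) :=
    hu.deriv_of_isOpen isOpen_Ioo (by exact_mod_cast le_top)
  intro n
  induction n with
  | zero =>
      intro x hx
      have h2 : iteratedDeriv 2 u x = deriv (deriv u) x := by
        rw [iteratedDeriv_succ, iteratedDeriv_one]
      rw [h2, deriv2_formula ha hapos hu hueq hx]
      simp [Ecoef, Fcoef, iteratedDeriv_zero]
  | succ n ih =>
      intro x hx
      have hmem := isOpen_Ioo.mem_nhds hx
      have hane : ((a x : ℂ)) ≠ 0 := by exact_mod_cast (hapos x hx).ne'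
      -- differentiability facts at x
      have dAt : ∀ {g : ℝ → ℂ}, ContDiffOn ℝ (⊤ : ℕ∞) g (Set.Ioo p q) →
          HasDerivAt g (deriv g x) x := fun hg =>
        ((hg.contDiffAt hmem).differentiableAt (by simp)).hasDerivAt
      have hE := Ecoef_smooth ha hk hapos n
      have hE1 := dAt hE.1
      have hE2 := dAt hE.2
      have hdu := dAt hu
      have hdu' := dAt hu'
      -- RHS function
      set G : ℝ → ℂ := fun y => (Ecoef a k n).1 y * u y + (Ecoef a k n).2 y * deriv u y
        + ∑ ℓ ∈ Finset.range (n + 1), Fcoef a k n (ℓ + 1) y * iteratedDeriv ℓ f y with hG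
      have hev : iteratedDeriv (n + 2) u =ᶠ[𝓝 x] G :=
        Filter.eventuallyEq_of_mem hmem (fun y hy => ih y hy)
      have hstep : iteratedDeriv (n + 3) u x = deriv G x := by
        rw [iteratedDeriv_succ]
        exact hev.deriv_eq
      have hFsum : HasDerivAt
          (fun y => ∑ ℓ ∈ Finset.range (n + 1), Fcoef a k n (ℓ + 1) y * iteratedDeriv ℓ f y)
          (∑ ℓ ∈ Finset.range (n + 1),
            (deriv (Fcoef a k n (ℓ + 1)) x * iteratedDeriv ℓ f x
              + Fcoef a k n (ℓ + 1) x * iteratedDeriv (ℓ + 1) f x)) x := by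
        apply HasDerivAt.fun_sum
        intro ℓ _
        have h1 := dAt (Fcoef_smooth ha hk hapos n (ℓ + 1))
        have h2 := dAt (iteratedDeriv_smooth hf ℓ)
        have := h1.mul h2
        rwa [← iteratedDeriv_succ] at this
      have hGd : HasDerivAt G
          ((deriv (Ecoef a k n).1 x * u x + (Ecoef a k n).1 x * deriv u x)
            + (deriv (Ecoef a k n).2 x * deriv u x + (Ecoef a k n).2 x * deriv (deriv u) x)
            + ∑ ℓ ∈ Finset.range (n + 1),
              (deriv (Fcoef a k n (ℓ + 1)) x * iteratedDeriv ℓ f x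
                + Fcoef a k n (ℓ + 1) x * iteratedDeriv (ℓ + 1) f x)) x :=
        ((hE1.mul hdu).add (hE2.mul hdu')).add hFsum
      rw [show n + 1 + 2 = n + 3 from rfl, hstep, hGd.deriv]
      -- now pure algebra
      rw [deriv2_formula ha hapos hu hueq hx]
      -- unfold Ecoef (n+1) and Fcoef (n+1)
      show _ = (fun x => deriv (Ecoef a k n).1 x - k x / (a x : ℂ) * (Ecoef a k n).2 x) x * u x
          + (fun x => (Ecoef a k n).1 x + deriv (Ecoef a k n).2 x
              - ((deriv a x : ℝ) : ℂ) / (a x : ℂ) * (Ecoef a k n).2 x) x * deriv u x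
          + ∑ ℓ ∈ Finset.range (n + 2),
              (fun x => deriv (Fcoef a k n (ℓ + 1)) x + Fcoef a k n ℓ x) x * iteratedDeriv ℓ f x
      simp only []
      -- rearrange the sums
      rw [Finset.sum_add_distrib]
      simp only [add_mul]
      rw [Finset.sum_add_distrib (s := Finset.range (n + 2))]
      have hz : deriv (Fcoef a k n (n + 1 + 1)) x = 0 := by
        rw [Fcoef_eq_zero n (n + 2) le_rfl]
        simp
      rw [Finset.sum_range_succ (fun ℓ => deriv (Fcoef a k n (ℓ + 1)) x * iteratedDeriv ℓ f x) (n+1),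
        hz]
      rw [Finset.sum_range_succ' (fun ℓ => Fcoef a k n ℓ x * iteratedDeriv ℓ f x) (n+1)]
      rw [Fcoef_zero_right (a := a) (k := k) n]
      simp only [iteratedDeriv_zero, zero_mul, add_zero]
      ring

private lemma taylor_coeff_eq {p q : ℝ} {a : ℝ → ℝ} {k f u : ℝ → ℂ}
    (ha : ContDiffOn ℝ (⊤ : ℕ∞) a (Set.Ioo p q))
    (hk : ContDiffOn ℝ (⊤ : ℕ∞) k (Set.Ioo p q))
    (hf : ContDiffOn ℝ (⊤ : ℕ∞) f (Set.Ioo p q))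
    (hapos : ∀ x ∈ Set.Ioo p q, 0 < a x)
    (hu : ContDiffOn ℝ (⊤ : ℕ∞) u (Set.Ioo p q))
    (hueq : ∀ x ∈ Set.Ioo p q,
      deriv (fun y => (a y : ℂ) * deriv u y) x + k x * u x = f x)
    {xb : ℝ} (hxb : xb ∈ Set.Ioo p q) (M : ℕ) (hM : 2 ≤ M) (h : ℝ) :
    (u xb * (1 + ∑ j ∈ Finset.Icc 2 M, Ej0 a k j xb * (h : ℂ) ^ j / (Nat.factorial j : ℂ))
      + deriv u xb *
        ((h : ℂ) + ∑ j ∈ Finset.Icc 2 M, Ej1 a k j xb * (h : ℂ) ^ j / (Nat.factorial j : ℂ))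
      + ∑ j ∈ Finset.Icc 2 M, ∑ ℓ ∈ Finset.range (j - 1),
          Fjl a k j ℓ xb * iteratedDeriv ℓ f xb * (h : ℂ) ^ j / (Nat.factorial j : ℂ))
    = ∑ j ∈ Finset.range (M + 1),
        iteratedDeriv j u xb * (h : ℂ) ^ j / (Nat.factorial j : ℂ) := by
  have hsplit : Finset.range (M + 1) = insert 0 (insert 1 (Finset.Icc 2 M)) := by
    ext j; simp; omega
  rw [hsplit, Finset.sum_insert (by simp), Finset.sum_insert (by simp)]
  simp only [iteratedDeriv_zero, iteratedDeriv_one, pow_zero, pow_one, Nat.factorial_zero,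
    Nat.factorial_one, Nat.cast_one, mul_one, div_one]
  have hterm : ∀ j ∈ Finset.Icc 2 M,
      iteratedDeriv j u xb * (h : ℂ) ^ j / (Nat.factorial j : ℂ)
        = u xb * (Ej0 a k j xb * (h : ℂ) ^ j / (Nat.factorial j : ℂ))
          + deriv u xb * (Ej1 a k j xb * (h : ℂ) ^ j / (Nat.factorial j : ℂ))
          + ∑ ℓ ∈ Finset.range (j - 1),
              Fjl a k j ℓ xb * iteratedDeriv ℓ f xb * (h : ℂ) ^ j / (Nat.factorial j : ℂ) := by
    intro j hj
    rw [Finset.mem_Icc] at hj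
    obtain ⟨n, rfl⟩ : ∃ n, j = n + 2 := ⟨j - 2, by omega⟩
    rw [helm_iteratedDeriv ha hk hf hapos hu hueq n xb hxb]
    have hr : n + 2 - 1 = n + 1 := rfl
    unfold Ej0 Ej1 Fjl
    simp only [Nat.add_sub_cancel, hr]
    rw [add_mul, add_mul, add_div, add_div, Finset.sum_mul, Finset.sum_div]
    ring_nf
  rw [Finset.sum_congr rfl hterm, Finset.sum_add_distrib, Finset.sum_add_distrib,
    ← Finset.mul_sum, ← Finset.mul_sum]
  ring

/-- Proposition 3.1(3.3), truncated form.  If `u` is smooth on the open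
interval `I = (p, q)` and satisfies `(a u')' + k u = f` on `I`, then at a base point
`x_b ∈ I` the truncated solution expansion approximates `u(x_b + h)` to order `O(h^{M+1})`
as `h → 0`. -/
theorem truncated_solution_expansion_of_helmholtz
    (p q : ℝ) (a : ℝ → ℝ) (k f u : ℝ → ℂ)
    (ha : ContDiffOn ℝ (⊤ : ℕ∞) a (Set.Ioo p q))
    (hk : ContDiffOn ℝ (⊤ : ℕ∞) k (Set.Ioo p q))
    (hf : ContDiffOn ℝ (⊤ : ℕ∞) f (Set.Ioo p q))
    (hapos : ∀ x ∈ Set.Ioo p q, 0 < a x)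
    (hu : ContDiffOn ℝ (⊤ : ℕ∞) u (Set.Ioo p q))
    (hueq : ∀ x ∈ Set.Ioo p q,
      deriv (fun y => (a y : ℂ) * deriv u y) x + k x * u x = f x)
    (xb : ℝ) (hxb : xb ∈ Set.Ioo p q) (M : ℕ) (hM : 2 ≤ M) :
    (fun h : ℝ => u (xb + h) -
        (u xb * (1 + ∑ j ∈ Finset.Icc 2 M, Ej0 a k j xb * (h : ℂ) ^ j / (Nat.factorial j : ℂ))
          + deriv u xb *
            ((h : ℂ) + ∑ j ∈ Finset.Icc 2 M, Ej1 a k j xb * (h : ℂ) ^ j / (Nat.factorial j : ℂ))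
          + ∑ j ∈ Finset.Icc 2 M, ∑ ℓ ∈ Finset.range (j - 1),
              Fjl a k j ℓ xb * iteratedDeriv ℓ f xb * (h : ℂ) ^ j / (Nat.factorial j : ℂ)))
      =O[𝓝 (0 : ℝ)] fun h : ℝ => h ^ (M + 1) := by
  have h0 : (0 : ℝ) ∈ Set.Ioo (p - xb) (q - xb) := by
    obtain ⟨h1, h2⟩ := hxb; constructor <;> simp <;> linarith
  have hmaps : Set.MapsTo (fun h : ℝ => xb + h) (Set.Ioo (p - xb) (q - xb)) (Set.Ioo p q) := by
    intro h hh
    obtain ⟨h1, h2⟩ := hh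
    constructor <;> simp only [] <;> linarith
  have hg : ContDiffOn ℝ (⊤ : ℕ∞) (fun h : ℝ => u (xb + h)) (Set.Ioo (p - xb) (q - xb)) :=
    hu.comp ((contDiff_const.add contDiff_id).contDiffOn) hmaps
  have htay := taylor_peano isOpen_Ioo h0 hg M
  have hco : ∀ j, iteratedDeriv j (fun h : ℝ => u (xb + h)) 0 = iteratedDeriv j u xb := by
    intro j
    have := iteratedDeriv_comp_const_add j u xb
    calc iteratedDeriv j (fun h : ℝ => u (xb + h)) 0
        = iteratedDeriv j u (xb + 0) := by rw [this]
      _ = iteratedDeriv j u xb := by rw [add_zero]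
  have hfun : (fun h : ℝ => u (xb + h) -
      ∑ j ∈ Finset.range (M + 1),
        iteratedDeriv j (fun h : ℝ => u (xb + h)) 0 * (h : ℂ) ^ j / (Nat.factorial j : ℂ))
      = (fun h : ℝ => u (xb + h) -
        (u xb * (1 + ∑ j ∈ Finset.Icc 2 M, Ej0 a k j xb * (h : ℂ) ^ j / (Nat.factorial j : ℂ))
          + deriv u xb *
            ((h : ℂ) + ∑ j ∈ Finset.Icc 2 M, Ej1 a k j xb * (h : ℂ) ^ j / (Nat.factorial j : ℂ))
          + ∑ j ∈ Finset.Icc 2 M, ∑ ℓ ∈ Finset.range (j - 1),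
              Fjl a k j ℓ xb * iteratedDeriv ℓ f xb * (h : ℂ) ^ j / (Nat.factorial j : ℂ))) := by
    funext h
    rw [taylor_coeff_eq ha hk hf hapos hu hueq hxb M hM h]
    congr 1
    exact Finset.sum_congr rfl fun j _ => by rw [hco j]
  rw [← hfun]
  exact htay
end

section
/- Let x_b ∈ I, let M ≥ 2 be an integer, and let α, c_{−1}, c_0, c_1 : ℝ → ℂ be continuous on a neighborhood of 0 with α(0) ≠ 0. Assume that, as h → 0: c_1(h)·𝔈_1(h) − α(h) = O(h^{M+1}), c_{−1}(h)·𝔈_1(−h) − α(h) = O(h^{M+1}), and c_0(h) + c_1(h)·𝔈_0(h) + c_{−1}(h)·𝔈_0(−h) = O(h^{M+2}). Then for every infinitely differentiable u : I → ℂ satisfying (a u')' + k u = 0 on I, one has c_{−1}(h)·u(x_b − h) + c_0(h)·u(x_b) + c_1(h)·u(x_b + h) = O(h^{M+2}) as h → 0; equivalently, the compact three-point stencil h^{−2}[c_{−1}(h)u(x_b−h) + c_0(h)u(x_b) + c_1(h)u(x_b+h)] has numerical dispersion order M at the base point x_b. -/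
open Filter Topology Asymptotics

section AuxLemmas
open Set

private lemma itdw_open {s : Set ℝ} (hs : IsOpen s) (f : ℝ → ℂ) (n : ℕ) :
    ∀ x ∈ s, iteratedDerivWithin n f s x = iteratedDeriv n f x := by
  induction n with
  | zero => intro x hx; simp
  | succ n ih =>
    intro x hx
    rw [iteratedDerivWithin_succ,
      derivWithin_congr ih (ih x hx), derivWithin_of_isOpen hs hx, iteratedDeriv_succ]

private lemma itd_diff {s : Set ℝ} (hs : IsOpen s) {f : ℝ → ℂ} (hf : ContDiffOn ℝ (⊤ : ℕ∞) f s)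
    (n : ℕ) {x : ℝ} (hx : x ∈ s) : DifferentiableAt ℝ (iteratedDeriv n f) x := by
  have h1 : DifferentiableOn ℝ (iteratedDerivWithin n f s) s :=
    hf.differentiableOn_iteratedDerivWithin (by exact_mod_cast WithTop.coe_lt_top n)
      hs.uniqueDiffOn
  have h2 : DifferentiableAt ℝ (iteratedDerivWithin n f s) x :=
    (h1 x hx).differentiableAt (hs.mem_nhds hx)
  refine h2.congr_of_eventuallyEq ?_
  filter_upwards [hs.mem_nhds hx] with y hy using (itdw_open hs f n y hy).symm

private lemma itdw_eq_itd {s : Set ℝ} (hs : IsOpen s) {f : ℝ → ℂ} (hf : ContDiffOn ℝ (⊤ : ℕ∞) f s)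
    {t : Set ℝ} (hts : t ⊆ s) (ht : UniqueDiffOn ℝ t) (n : ℕ) :
    ∀ x ∈ t, iteratedDerivWithin n f t x = iteratedDeriv n f x := by
  induction n with
  | zero => intro x hx; simp
  | succ n ih =>
    intro x hx
    rw [iteratedDerivWithin_succ,
      derivWithin_congr ih (ih x hx),
      (itd_diff hs hf n (hts hx)).derivWithin (ht.uniqueDiffWithinAt hx), iteratedDeriv_succ]

private lemma taylor_isBigO_right {s : Set ℝ} (hs : IsOpen s) {f : ℝ → ℂ}
    (hf : ContDiffOn ℝ (⊤ : ℕ∞) f s) (h0 : (0:ℝ) ∈ s) (N : ℕ) :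
    (fun h : ℝ => f h - ∑ j ∈ Finset.range (N + 1),
        ((j.factorial : ℂ))⁻¹ * (h : ℂ) ^ j * iteratedDeriv j f 0)
      =O[𝓝[≥] (0:ℝ)] fun h => h ^ (N + 1) := by
  obtain ⟨δ, hδ, hsub⟩ : ∃ δ > 0, Icc (-δ) δ ⊆ s := by
    obtain ⟨δ, hδ, hsub⟩ := Metric.nhds_basis_closedBall.mem_iff.1 (hs.mem_nhds h0)
    refine ⟨δ, hδ, ?_⟩
    rwa [Real.closedBall_eq_Icc, zero_sub, zero_add] at hsub
  have hIcc : Icc (0:ℝ) δ ⊆ s := fun y hy => hsub ⟨le_trans (by linarith) hy.1, hy.2⟩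
  have hf' : ContDiffOn ℝ (N + 1 : ℕ) f (Icc 0 δ) := (hf.of_le (by exact_mod_cast le_top)).mono hIcc
  obtain ⟨C, hC⟩ := exists_taylor_mean_remainder_bound hδ.le hf'
  rw [isBigO_iff]
  refine ⟨C, ?_⟩
  filter_upwards [Icc_mem_nhdsGE_of_mem (⟨le_refl 0, hδ⟩ : (0:ℝ) ∈ Ico 0 δ)] with y hy
  have hTy : taylorWithinEval f N (Icc 0 δ) 0 y
      = ∑ j ∈ Finset.range (N + 1), ((j.factorial : ℂ))⁻¹ * (y : ℂ) ^ j * iteratedDeriv j f 0 := by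
    rw [taylor_within_apply]
    refine Finset.sum_congr rfl fun j _ => ?_
    rw [itdw_eq_itd hs hf hIcc (uniqueDiffOn_Icc hδ) j 0 ⟨le_refl 0, hδ.le⟩]
    rw [Complex.real_smul]
    push_cast
    ring
  have := hC y hy
  rw [hTy] at this
  calc ‖f y - ∑ j ∈ Finset.range (N + 1), ((j.factorial : ℂ))⁻¹ * (y:ℂ) ^ j * iteratedDeriv j f 0‖
      ≤ C * (y - 0) ^ (N + 1) := this
    _ ≤ C * ‖y ^ (N + 1)‖ := by
        rw [sub_zero, Real.norm_eq_abs, abs_pow, abs_of_nonneg hy.1]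

section
variable {p q : ℝ} {a : ℝ → ℝ} {k : ℝ → ℂ}

private lemma ecoef_smooth (ha : ContDiffOn ℝ (⊤ : ℕ∞) a (Ioo p q))
    (hk : ContDiffOn ℝ (⊤ : ℕ∞) k (Ioo p q)) (hapos : ∀ x ∈ Ioo p q, 0 < a x) (n : ℕ) :
    ContDiffOn ℝ (⊤ : ℕ∞) (Ecoef a k n).1 (Ioo p q)
      ∧ ContDiffOn ℝ (⊤ : ℕ∞) (Ecoef a k n).2 (Ioo p q) := by
  have hopen : IsOpen (Ioo p q) := isOpen_Ioo
  have hane : ∀ x ∈ Ioo p q, (a x : ℂ) ≠ 0 := fun x hx => by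
    exact_mod_cast (hapos x hx).ne'
  have haC : ContDiffOn ℝ (⊤ : ℕ∞) (fun x => (a x : ℂ)) (Ioo p q) :=
    Complex.ofRealCLM.contDiff.comp_contDiffOn ha
  have hda : ContDiffOn ℝ (⊤ : ℕ∞) (fun x => ((deriv a x : ℝ) : ℂ)) (Ioo p q) :=
    Complex.ofRealCLM.contDiff.comp_contDiffOn (ha.deriv_of_isOpen hopen (by exact_mod_cast le_top))
  have hainv : ContDiffOn ℝ (⊤ : ℕ∞) (fun x => ((a x : ℂ))⁻¹) (Ioo p q) := haC.inv hane
  induction n with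
  | zero =>
    constructor
    · simp only [Ecoef, div_eq_mul_inv]
      exact hk.neg.mul hainv
    · simp only [Ecoef, div_eq_mul_inv]
      exact hda.neg.mul hainv
  | succ n ih =>
    constructor
    · simp only [Ecoef, div_eq_mul_inv]
      exact (ih.1.deriv_of_isOpen hopen (by exact_mod_cast le_top)).sub
        ((hk.mul hainv).mul ih.2)
    · simp only [Ecoef, div_eq_mul_inv]
      exact (ih.1.add (ih.2.deriv_of_isOpen hopen (by exact_mod_cast le_top))).sub
        ((hda.mul hainv).mul ih.2)

private lemma iter_deriv_eq (ha : ContDiffOn ℝ (⊤ : ℕ∞) a (Ioo p q))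
    (hk : ContDiffOn ℝ (⊤ : ℕ∞) k (Ioo p q)) (hapos : ∀ x ∈ Ioo p q, 0 < a x)
    {u : ℝ → ℂ} (hu : ContDiffOn ℝ (⊤ : ℕ∞) u (Ioo p q))
    (hODE : ∀ x ∈ Ioo p q, deriv (fun y => (a y : ℂ) * deriv u y) x + k x * u x = 0) (n : ℕ) :
    ∀ x ∈ Ioo p q, iteratedDeriv (n + 2) u x
      = (Ecoef a k n).1 x * u x + (Ecoef a k n).2 x * deriv u x := by
  have hopen : IsOpen (Ioo p q) := isOpen_Ioo
  have hane : ∀ x ∈ Ioo p q, (a x : ℂ) ≠ 0 := fun x hx => by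
    exact_mod_cast (hapos x hx).ne'
  -- second derivative identity
  have hu1 : ∀ x ∈ Ioo p q, DifferentiableAt ℝ (deriv u) x := by
    intro x hx
    have := itd_diff hopen hu 1 hx
    rwa [iteratedDeriv_one] at this
  have hu2 : ∀ x ∈ Ioo p q, deriv (deriv u) x
      = (Ecoef a k 0).1 x * u x + (Ecoef a k 0).2 x * deriv u x := by
    intro x hx
    have hadiff : HasDerivAt (fun y => (a y : ℂ)) ((deriv a x : ℝ) : ℂ) x := by
      have h1 : DifferentiableAt ℝ a x :=
        (ha.differentiableOn (by simp) x hx).differentiableAt (hopen.mem_nhds hx)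
      exact h1.hasDerivAt.ofReal_comp
    have hprod : HasDerivAt (fun y => (a y : ℂ) * deriv u y)
        (((deriv a x : ℝ) : ℂ) * deriv u x + (a x : ℂ) * deriv (deriv u) x) x :=
      hadiff.mul (hu1 x hx).hasDerivAt
    have hode := hODE x hx
    rw [hprod.deriv] at hode
    have hA := hane x hx
    simp only [Ecoef]
    field_simp [hA]
    linear_combination hode
  induction n with
  | zero =>
    intro x hx
    rw [show (0:ℕ) + 2 = 1 + 1 from rfl, iteratedDeriv_succ, iteratedDeriv_one]
    exact hu2 x hx
  | succ n ih =>
    intro x hx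
    have hE := ecoef_smooth ha hk hapos n
    have hE1 : HasDerivAt (Ecoef a k n).1 (deriv (Ecoef a k n).1 x) x :=
      ((hE.1.differentiableOn (by simp) x hx).differentiableAt
        (hopen.mem_nhds hx)).hasDerivAt
    have hE2 : HasDerivAt (Ecoef a k n).2 (deriv (Ecoef a k n).2 x) x :=
      ((hE.2.differentiableOn (by simp) x hx).differentiableAt
        (hopen.mem_nhds hx)).hasDerivAt
    have hu0 : HasDerivAt u (deriv u x) x :=
      ((hu.differentiableOn (by simp) x hx).differentiableAt
        (hopen.mem_nhds hx)).hasDerivAt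
    have hud : HasDerivAt (deriv u) (deriv (deriv u) x) x := (hu1 x hx).hasDerivAt
    have hsum : HasDerivAt (fun y => (Ecoef a k n).1 y * u y + (Ecoef a k n).2 y * deriv u y)
        (deriv (Ecoef a k n).1 x * u x + (Ecoef a k n).1 x * deriv u x
          + (deriv (Ecoef a k n).2 x * deriv u x + (Ecoef a k n).2 x * deriv (deriv u) x)) x :=
      (hE1.mul hu0).add (hE2.mul hud)
    have heq : deriv (iteratedDeriv (n + 2) u) x
        = deriv (fun y => (Ecoef a k n).1 y * u y + (Ecoef a k n).2 y * deriv u y) x := by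
      apply Filter.EventuallyEq.deriv_eq
      filter_upwards [hopen.mem_nhds hx] with y hy using ih y hy
    rw [show n + 1 + 2 = (n + 2) + 1 from rfl, iteratedDeriv_succ, heq, hsum.deriv, hu2 x hx]
    simp only [Ecoef]
    ring

end

private lemma taylor_both {s : Set ℝ} (hs : IsOpen s) {u : ℝ → ℂ}
    (hu : ContDiffOn ℝ (⊤ : ℕ∞) u s) {xb : ℝ} (hxb : xb ∈ s) (N : ℕ)
    (taylor_right : ∀ {t : Set ℝ}, IsOpen t → ∀ {f : ℝ → ℂ}, ContDiffOn ℝ (⊤ : ℕ∞) f t →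
      (0:ℝ) ∈ t →
      (fun h : ℝ => f h - ∑ j ∈ Finset.range (N + 1),
        ((j.factorial : ℂ))⁻¹ * (h : ℂ) ^ j * iteratedDeriv j f 0)
        =O[𝓝[≥] (0:ℝ)] fun h => h ^ (N + 1)) :
    ((fun h : ℝ => u (xb + h) - ∑ j ∈ Finset.range (N + 1),
        ((j.factorial : ℂ))⁻¹ * (h : ℂ) ^ j * iteratedDeriv j u xb)
      =O[𝓝 (0:ℝ)] fun h => h ^ (N + 1)) ∧
    ((fun h : ℝ => u (xb - h) - ∑ j ∈ Finset.range (N + 1),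
        ((j.factorial : ℂ))⁻¹ * ((-h : ℝ) : ℂ) ^ j * iteratedDeriv j u xb)
      =O[𝓝 (0:ℝ)] fun h => h ^ (N + 1)) := by
  set F : ℝ → ℂ := fun h => u (xb + h) with hF
  set G : ℝ → ℂ := fun h => F (-h) with hG
  have hGu : ∀ h : ℝ, G h = u (xb - h) := by intro h; simp [hG, hF, sub_eq_add_neg]
  set t : Set ℝ := (fun h : ℝ => xb + h) ⁻¹' s with ht
  have hto : IsOpen t := hs.preimage (by continuity)
  have h0t : (0:ℝ) ∈ t := by simp [ht, hxb]
  have hFt : ContDiffOn ℝ (⊤ : ℕ∞) F t :=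
    hu.comp ((contDiff_const.add contDiff_id).contDiffOn) (fun x hx => hx)
  set t' : Set ℝ := (fun h : ℝ => -h) ⁻¹' t with ht'
  have hto' : IsOpen t' := hto.preimage (by continuity)
  have h0t' : (0:ℝ) ∈ t' := by simpa [ht'] using h0t
  have hGt : ContDiffOn ℝ (⊤ : ℕ∞) G t' :=
    hFt.comp (contDiff_neg.contDiffOn) (fun x hx => hx)
  have hFd : ∀ j, iteratedDeriv j F 0 = iteratedDeriv j u xb := by
    intro j
    rw [hF, iteratedDeriv_comp_const_add j u xb]
    simp
  have hGd : ∀ j, iteratedDeriv j G 0 = ((-1 : ℝ)) ^ j • iteratedDeriv j u xb := by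
    intro j
    rw [hG, iteratedDeriv_comp_neg j F 0, neg_zero, hFd]
  -- right-sided estimates
  have hRF : (fun h : ℝ => F h - ∑ j ∈ Finset.range (N + 1),
      ((j.factorial : ℂ))⁻¹ * (h : ℂ) ^ j * iteratedDeriv j u xb)
      =O[𝓝[≥] (0:ℝ)] fun h => h ^ (N + 1) := by
    have := taylor_right hto hFt h0t
    simp only [hFd] at this
    exact this
  have hRG : (fun h : ℝ => G h - ∑ j ∈ Finset.range (N + 1),
      ((j.factorial : ℂ))⁻¹ * ((-h : ℝ) : ℂ) ^ j * iteratedDeriv j u xb)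
      =O[𝓝[≥] (0:ℝ)] fun h => h ^ (N + 1) := by
    have := taylor_right hto' hGt h0t'
    simp only [hGd] at this
    refine this.congr_left fun h => ?_
    congr 1
    refine Finset.sum_congr rfl fun j _ => ?_
    have hsm : ((-1 : ℝ)) ^ j • iteratedDeriv j u xb
        = ((-1 : ℂ)) ^ j * iteratedDeriv j u xb := by
      rw [Complex.real_smul]; push_cast; ring
    rw [hsm]
    push_cast
    ring
  -- negation transport
  have hneg : Tendsto (fun h : ℝ => -h) (𝓝[≤] (0:ℝ)) (𝓝[≥] (0:ℝ)) := by
    rw [tendsto_nhdsWithin_iff]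
    constructor
    · exact (continuous_neg.tendsto' 0 0 (by simp)).mono_left nhdsWithin_le_nhds
    · filter_upwards [self_mem_nhdsWithin] with x hx
      simpa using hx
  have hpowneg : (fun h : ℝ => (-h) ^ (N + 1)) =O[𝓝[≤] (0:ℝ)] fun h => h ^ (N + 1) := by
    apply isBigO_of_le
    intro x
    simp [abs_pow]
  have hRFl : (fun h : ℝ => F h - ∑ j ∈ Finset.range (N + 1),
      ((j.factorial : ℂ))⁻¹ * (h : ℂ) ^ j * iteratedDeriv j u xb)
      =O[𝓝[≤] (0:ℝ)] fun h => h ^ (N + 1) := by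
    have := (hRG.comp_tendsto hneg).trans hpowneg
    refine this.congr_left fun h => ?_
    simp [hG, Function.comp, neg_neg]
  have hRGl : (fun h : ℝ => G h - ∑ j ∈ Finset.range (N + 1),
      ((j.factorial : ℂ))⁻¹ * ((-h : ℝ) : ℂ) ^ j * iteratedDeriv j u xb)
      =O[𝓝[≤] (0:ℝ)] fun h => h ^ (N + 1) := by
    have := (hRF.comp_tendsto hneg).trans hpowneg
    refine this.congr_left fun h => ?_
    simp [hG, Function.comp]
  constructor
  · have : (fun h : ℝ => F h - ∑ j ∈ Finset.range (N + 1),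
        ((j.factorial : ℂ))⁻¹ * (h : ℂ) ^ j * iteratedDeriv j u xb)
        =O[𝓝 (0:ℝ)] fun h => h ^ (N + 1) := by
      rw [← nhdsLE_sup_nhdsGE]
      exact hRFl.sup hRF
    exact this
  · have : (fun h : ℝ => G h - ∑ j ∈ Finset.range (N + 1),
        ((j.factorial : ℂ))⁻¹ * ((-h : ℝ) : ℂ) ^ j * iteratedDeriv j u xb)
        =O[𝓝 (0:ℝ)] fun h => h ^ (N + 1) := by
      rw [← nhdsLE_sup_nhdsGE]
      exact hRGl.sup hRG
    refine this.congr_left fun h => ?_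
    rw [hGu]

end AuxLemmas

/-- Theorem 3.2, numerical dispersion part.  Under the conditions (3.6)
on the stencil coefficients `c₋₁, c₀, c₁`, the compact three-point stencil annihilates every
smooth solution of the homogeneous equation `(a u')' + k u = 0` up to `O(h^{M+2})`, i.e. the
scheme has numerical dispersion order `M` at the base point `x_b`. -/
theorem compact_stencil_dispersion_order
    (p q : ℝ) (a : ℝ → ℝ) (k : ℝ → ℂ)
    (ha : ContDiffOn ℝ (⊤ : ℕ∞) a (Set.Ioo p q))
    (hk : ContDiffOn ℝ (⊤ : ℕ∞) k (Set.Ioo p q))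
    (hapos : ∀ x ∈ Set.Ioo p q, 0 < a x)
    (xb : ℝ) (hxb : xb ∈ Set.Ioo p q) (M : ℕ) (hM : 2 ≤ M)
    (α cm1 c0 c1 : ℝ → ℂ)
    (hαcont : ∃ U ∈ 𝓝 (0 : ℝ), ContinuousOn α U)
    (hcm1cont : ∃ U ∈ 𝓝 (0 : ℝ), ContinuousOn cm1 U)
    (hc0cont : ∃ U ∈ 𝓝 (0 : ℝ), ContinuousOn c0 U)
    (hc1cont : ∃ U ∈ 𝓝 (0 : ℝ), ContinuousOn c1 U)
    (hα0 : α 0 ≠ 0)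
    (hc1 : (fun h : ℝ => c1 h * EPoly1 a k xb (M + 1) h - α h)
      =O[𝓝 (0 : ℝ)] fun h : ℝ => h ^ (M + 1))
    (hcm1 : (fun h : ℝ => cm1 h * EPoly1 a k xb (M + 1) (-h) - α h)
      =O[𝓝 (0 : ℝ)] fun h : ℝ => h ^ (M + 1))
    (hc0 : (fun h : ℝ => c0 h + c1 h * EPoly0 a k xb (M + 1) h + cm1 h * EPoly0 a k xb (M + 1) (-h))
      =O[𝓝 (0 : ℝ)] fun h : ℝ => h ^ (M + 2)) :
    ∀ u : ℝ → ℂ, ContDiffOn ℝ (⊤ : ℕ∞) u (Set.Ioo p q) →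
      (∀ x ∈ Set.Ioo p q, deriv (fun y => (a y : ℂ) * deriv u y) x + k x * u x = 0) →
      (fun h : ℝ => cm1 h * u (xb - h) + c0 h * u xb + c1 h * u (xb + h))
        =O[𝓝 (0 : ℝ)] fun h : ℝ => h ^ (M + 2) := by
  intro u hu hODE
  have hopen : IsOpen (Set.Ioo p q) := isOpen_Ioo
  -- Taylor polynomial of `u` at `xb`
  set T : ℝ → ℂ := fun h => ∑ j ∈ Finset.range (M + 2),
      ((j.factorial : ℂ))⁻¹ * (h : ℂ) ^ j * iteratedDeriv j u xb with hTdef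
  obtain ⟨hRF, hRG⟩ := taylor_both hopen hu hxb (M + 1)
      (fun {t} hto {f} hf h0 => taylor_isBigO_right hto hf h0 (M + 1))
  -- the key Taylor-coefficient identity
  have hder : ∀ j ∈ Finset.Icc 2 (M + 1), iteratedDeriv j u xb
      = Ej0 a k j xb * u xb + Ej1 a k j xb * deriv u xb := by
    intro j hj
    simp only [Finset.mem_Icc] at hj
    have h2 := iter_deriv_eq ha hk hapos hu hODE (j - 2) xb hxb
    rw [show j - 2 + 2 = j from by omega] at h2
    exact h2
  have hT : ∀ h : ℝ, T h = u xb * EPoly0 a k xb (M + 1) h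
      + deriv u xb * (h : ℂ) * EPoly1 a k xb (M + 1) h := by
    intro h
    have hsplit : T h = (∑ j ∈ Finset.range 2,
          ((j.factorial : ℂ))⁻¹ * (h : ℂ) ^ j * iteratedDeriv j u xb)
        + ∑ j ∈ Finset.Icc 2 (M + 1),
          ((j.factorial : ℂ))⁻¹ * (h : ℂ) ^ j * iteratedDeriv j u xb := by
      simp only [hTdef]
      rw [Finset.range_eq_Ico, ← Finset.sum_Ico_consecutive _ (by omega : 0 ≤ 2)
        (by omega : 2 ≤ M + 2), ← Finset.range_eq_Ico, (by exact Finset.Ico_add_one_right_eq_Icc 2 (M + 1) :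
          Finset.Ico 2 (M + 2) = Finset.Icc 2 (M + 1))]
    have hkey : ∀ j ∈ Finset.Icc 2 (M + 1),
        ((j.factorial : ℂ))⁻¹ * (h : ℂ) ^ j * iteratedDeriv j u xb
        = u xb * (Ej0 a k j xb * (h : ℂ) ^ j / (j.factorial : ℂ))
          + deriv u xb * (h : ℂ)
            * (Ej1 a k j xb * (h : ℂ) ^ (j - 1) / (j.factorial : ℂ)) := by
      intro j hj
      have h2j : 2 ≤ j := (Finset.mem_Icc.mp hj).1
      have hpow : (h : ℂ) ^ j = (h : ℂ) * (h : ℂ) ^ (j - 1) := by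
        conv_lhs => rw [show j = (j - 1) + 1 from by omega]
        rw [pow_succ']
      rw [hder j hj, hpow]
      ring
    rw [hsplit, Finset.sum_congr rfl hkey, Finset.sum_add_distrib,
      ← Finset.mul_sum, ← Finset.mul_sum, Finset.sum_range_succ, Finset.sum_range_one,
      EPoly0, EPoly1]
    simp only [iteratedDeriv_zero, iteratedDeriv_one, Nat.factorial_zero, Nat.factorial_one,
      pow_zero, pow_one, Nat.cast_one, inv_one, one_mul, mul_one]
    ring
  -- pointwise decomposition of the stencil
  have hstencil : ∀ h : ℝ,
      cm1 h * u (xb - h) + c0 h * u xb + c1 h * u (xb + h)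
      = u xb * (c0 h + c1 h * EPoly0 a k xb (M + 1) h + cm1 h * EPoly0 a k xb (M + 1) (-h))
        + (h : ℂ) * (deriv u xb * ((c1 h * EPoly1 a k xb (M + 1) h - α h)
            - (cm1 h * EPoly1 a k xb (M + 1) (-h) - α h)))
        + cm1 h * (u (xb - h) - T (-h))
        + c1 h * (u (xb + h) - T h) := by
    intro h
    have h1 := hT h
    have h2 := hT (-h)
    push_cast at h2
    linear_combination cm1 h * h2 + c1 h * h1
  -- boundedness of the coefficients
  have hbound : ∀ {c : ℝ → ℂ}, (∃ U ∈ 𝓝 (0 : ℝ), ContinuousOn c U) →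
      c =O[𝓝 (0 : ℝ)] (fun _ : ℝ => (1 : ℝ)) := by
    rintro c ⟨U, hU, hcont⟩
    exact (hcont.continuousAt hU).isBigO_one ℝ
  have hA : (fun h : ℝ => u xb * (c0 h + c1 h * EPoly0 a k xb (M + 1) h
      + cm1 h * EPoly0 a k xb (M + 1) (-h))) =O[𝓝 (0 : ℝ)]
      (fun h : ℝ => h ^ (M + 2)) := hc0.const_mul_left (u xb)
  have hcoe : (fun h : ℝ => (h : ℂ)) =O[𝓝 (0 : ℝ)] (fun h : ℝ => h) :=
    isBigO_of_le _ (fun x => by simp)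
  have hB : (fun h : ℝ => (h : ℂ) * (deriv u xb * ((c1 h * EPoly1 a k xb (M + 1) h - α h)
      - (cm1 h * EPoly1 a k xb (M + 1) (-h) - α h)))) =O[𝓝 (0 : ℝ)]
      (fun h : ℝ => h ^ (M + 2)) := by
    have hmul := hcoe.mul ((hc1.sub hcm1).const_mul_left (deriv u xb))
    have hrw : (fun h : ℝ => h * h ^ (M + 1)) = fun h : ℝ => h ^ (M + 2) :=
      funext fun h => (pow_succ' h (M + 1)).symm
    rwa [hrw] at hmul
  have hRG' : (fun h : ℝ => u (xb - h) - T (-h)) =O[𝓝 (0 : ℝ)]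
      (fun h : ℝ => h ^ (M + 2)) := hRG
  have hRF' : (fun h : ℝ => u (xb + h) - T h) =O[𝓝 (0 : ℝ)]
      (fun h : ℝ => h ^ (M + 2)) := hRF
  have hC : (fun h : ℝ => cm1 h * (u (xb - h) - T (-h))) =O[𝓝 (0 : ℝ)]
      (fun h : ℝ => h ^ (M + 2)) := by
    have hmul := (hbound hcm1cont).mul hRG'
    have hrw : (fun h : ℝ => (1 : ℝ) * h ^ (M + 2)) = fun h : ℝ => h ^ (M + 2) :=
      funext fun h => one_mul _
    rwa [hrw] at hmul
  have hD : (fun h : ℝ => c1 h * (u (xb + h) - T h)) =O[𝓝 (0 : ℝ)]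
      (fun h : ℝ => h ^ (M + 2)) := by
    have hmul := (hbound hc1cont).mul hRF'
    have hrw : (fun h : ℝ => (1 : ℝ) * h ^ (M + 2)) = fun h : ℝ => h ^ (M + 2) :=
      funext fun h => one_mul _
    rwa [hrw] at hmul
  exact (((hA.add hB).add hC).add hD).congr_left fun h => (hstencil h).symm
end
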